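/- Let v and w be bounded linear operators on a complex Banach space with ‖v‖ + ‖w‖ ≤ 1. Then ‖Arcsin(v + w) − Arcsin v‖ ≤ arcsin(‖v‖ + ‖w‖) − arcsin(‖v‖). -/

import Mathlib

open scoped ENNReal NNReal

noncomputable section

/-- The Maclaurin coefficients of arcsin: `c_j = (2j)! / (4^j (j!)^2 (2j+1)) ≥ 0`. -/
def arcsinCoeff (j : ℕ) : ℝ :=
  (Nat.factorial (2 * j) : ℝ) / (4 ^ j * (Nat.factorial j : ℝ) ^ 2 * (2 * j + 1))

namespace ArcsinProof

def b (j : ℕ) : ℝ := (Nat.factorial (2 * j) : ℝ) / (4 ^ j * (Nat.factorial j : ℝ) ^ 2)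

lemma b_pos (j : ℕ) : 0 < b j := by
  unfold b
  positivity

lemma b_zero : b 0 = 1 := by simp [b, Nat.factorial]

lemma c_eq (j : ℕ) : arcsinCoeff j = b j / (2 * j + 1) := by
  unfold arcsinCoeff b; rw [div_div]

lemma c_pos (j : ℕ) : 0 < arcsinCoeff j := by
  rw [c_eq]; exact div_pos (b_pos j) (by positivity)

lemma c_mul (j : ℕ) : arcsinCoeff j * (2 * j + 1) = b j := by
  rw [c_eq, div_mul_cancel₀]
  positivity

lemma b_succ (j : ℕ) : b (j + 1) = (2 * j + 1) / (2 * j + 2) * b j := by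
  unfold b
  rw [show 2 * (j + 1) = (2 * j + 1) + 1 by ring, Nat.factorial_succ, Nat.factorial_succ,
    Nat.factorial_succ]
  have h1 : (Nat.factorial (2 * j) : ℝ) ≠ 0 := by positivity
  have h2 : (Nat.factorial j : ℝ) ≠ 0 := by positivity
  have h3 : (4 : ℝ) ^ j ≠ 0 := by positivity
  have h4 : ((j : ℝ) + 1) ≠ 0 := by positivity
  have h5 : (2 * (j : ℝ) + 2) ≠ 0 := by positivity
  push_cast
  field_simp
  ring

lemma b_le_one (j : ℕ) : b j ≤ 1 := by
  induction j with
  | zero => rw [b_zero]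
  | succ j ih =>
    rw [b_succ]
    have h := b_pos j
    have h1 : (2 * (j : ℝ) + 1) / (2 * j + 2) ≤ 1 := by
      rw [div_le_one (by positivity)]; linarith
    calc (2 * (j : ℝ) + 1) / (2 * j + 2) * b j ≤ 1 * b j := by
          apply mul_le_mul_of_nonneg_right h1 h.le
      _ ≤ 1 := by rw [one_mul]; exact ih

lemma b_sq (j : ℕ) : b j ^ 2 * (2 * j + 1) ≤ 1 := by
  induction j with
  | zero => rw [b_zero]; norm_num
  | succ j ih =>
    rw [b_succ]
    have h := b_pos j
    have hq : ((2 * (j:ℝ) + 1) / (2 * j + 2)) ^ 2 * (2 * (j:ℝ) + 3) ≤ 2 * j + 1 := by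
      rw [div_pow, div_mul_eq_mul_div, div_le_iff₀ (by positivity)]
      nlinarith [sq_nonneg ((j:ℝ))]
    push_cast
    nlinarith [hq, ih, sq_nonneg (b j), h]

lemma c_le (j : ℕ) : arcsinCoeff j ≤ 1 / ((j : ℝ) + 1) ^ ((3 : ℝ) / 2) := by
  have hj1 : (0 : ℝ) < (j : ℝ) + 1 := by positivity
  have hb : b j ≤ 1 / Real.sqrt ((j : ℝ) + 1) := by
    have h1 : b j ^ 2 ≤ 1 / ((j : ℝ) + 1) := by
      rw [le_div_iff₀ hj1]
      nlinarith [b_sq j, sq_nonneg (b j), b_pos j]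
    have h2 := Real.sqrt_le_sqrt h1
    rwa [Real.sqrt_sq (b_pos j).le, one_div, Real.sqrt_inv, ← one_div] at h2
  have hpow : ((j : ℝ) + 1) ^ ((3 : ℝ) / 2) = ((j : ℝ) + 1) * Real.sqrt ((j : ℝ) + 1) := by
    rw [show (3 : ℝ) / 2 = 1 + 1 / 2 by norm_num, Real.rpow_add hj1, Real.rpow_one,
      ← Real.sqrt_eq_rpow]
  calc arcsinCoeff j = b j / (2 * (j : ℝ) + 1) := c_eq j
    _ ≤ (1 / Real.sqrt ((j : ℝ) + 1)) / ((j : ℝ) + 1) := by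
        apply div_le_div₀ (by positivity) hb hj1 (by linarith)
    _ = 1 / ((j : ℝ) + 1) ^ ((3 : ℝ) / 2) := by
        rw [hpow, div_div, one_div, one_div, mul_comm]

lemma summable_c : Summable arcsinCoeff := by
  have h1 : Summable (fun n : ℕ => 1 / (n : ℝ) ^ ((3 : ℝ) / 2)) :=
    Real.summable_one_div_nat_rpow.mpr (by norm_num)
  have h2 : Summable (fun j : ℕ => 1 / ((j : ℝ) + 1) ^ ((3 : ℝ) / 2)) := by
    have := (summable_nat_add_iff (f := fun n : ℕ => 1 / (n : ℝ) ^ ((3 : ℝ) / 2)) 1).mpr h1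
    simpa using this
  exact h2.of_nonneg_of_le (fun j => (c_pos j).le) c_le

end ArcsinProof

namespace Stage2

open ArcsinProof

def phi (y : ℝ) : ℝ := ∑' j : ℕ, b j * y ^ j

def phiD (y : ℝ) : ℝ := ∑' j : ℕ, b j * ((j : ℝ) * y ^ (j - 1))

lemma summable_add_one_mul {r : ℝ} (h1 : |r| < 1) :
    Summable (fun j : ℕ => ((j : ℝ) + 1) * r ^ j) := by
  have ha : Summable (fun j : ℕ => (j : ℝ) ^ 1 * r ^ j) :=
    summable_pow_mul_geometric_of_norm_lt_one 1 (by simpa using h1)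
  have hb : Summable (fun j : ℕ => r ^ j) := summable_geometric_of_norm_lt_one (by simpa using h1)
  exact (ha.add hb).congr (fun j => by ring)

lemma summable_mul_pred {r : ℝ} (h1 : |r| < 1) :
    Summable (fun j : ℕ => (j : ℝ) * r ^ (j - 1)) := by
  apply (summable_nat_add_iff 1).mp
  apply (summable_add_one_mul h1).congr
  intro j
  push_cast
  simp

lemma abs_le_of_mem {y : ℝ} (hy : 0 ≤ y) (hy1 : y < 1) : |y| < 1 := by
  rw [abs_of_nonneg hy]; exact hy1

lemma summable_phi {y : ℝ} (hy : |y| < 1) : Summable (fun j : ℕ => b j * y ^ j) := by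
  apply Summable.of_norm_bounded
    (summable_geometric_of_norm_lt_one (x := |y|) (by simpa using hy))
  intro j
  rw [Real.norm_eq_abs, abs_mul, abs_of_pos (b_pos j), abs_pow]
  calc b j * |y| ^ j ≤ 1 * |y| ^ j := by
        apply mul_le_mul_of_nonneg_right (b_le_one j) (by positivity)
    _ = |y| ^ j := one_mul _

lemma summable_phiD_term {y : ℝ} (hy : |y| < 1) :
    Summable (fun j : ℕ => b j * ((j : ℝ) * y ^ (j - 1))) := by
  apply Summable.of_norm_bounded (summable_mul_pred (r := |y|) (by rwa [abs_abs]))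
  intro j
  rw [Real.norm_eq_abs, abs_mul, abs_of_pos (b_pos j), abs_mul, abs_pow,
    Nat.abs_cast]
  calc b j * ((j : ℝ) * |y| ^ (j - 1)) ≤ 1 * ((j : ℝ) * |y| ^ (j - 1)) := by
        apply mul_le_mul_of_nonneg_right (b_le_one j) (by positivity)
    _ = (j : ℝ) * |y| ^ (j - 1) := one_mul _

lemma phi_hasDeriv {y : ℝ} (hy : |y| < 1) : HasDerivAt phi (phiD y) y := by
  set r : ℝ := (1 + |y|) / 2 with hr
  have h0 : 0 ≤ |y| := abs_nonneg y
  have hyr : |y| < r := by rw [hr]; linarith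
  have hr1 : r < 1 := by rw [hr]; linarith
  have hr0 : 0 < r := by rw [hr]; linarith
  have hrr : |r| < 1 := by rwa [abs_of_pos hr0]
  apply hasDerivAt_tsum_of_isPreconnected (u := fun j : ℕ => (j : ℝ) * r ^ (j - 1))
    (summable_mul_pred hrr) Metric.isOpen_ball (convex_ball (0:ℝ) r).isPreconnected
    (g' := fun j z => b j * ((j : ℝ) * z ^ (j - 1))) (y₀ := 0)
  · intro j z _
    exact (hasDerivAt_pow j z).const_mul (b j)
  · intro j z hz
    rw [Metric.mem_ball, Real.dist_eq, sub_zero] at hz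
    rw [Real.norm_eq_abs, abs_mul, abs_of_pos (b_pos j), abs_mul, abs_pow, Nat.abs_cast]
    calc b j * ((j : ℝ) * |z| ^ (j - 1)) ≤ 1 * ((j : ℝ) * r ^ (j - 1)) := by
          apply mul_le_mul (b_le_one j) _ (by positivity) zero_le_one
          apply mul_le_mul_of_nonneg_left (pow_le_pow_left₀ (abs_nonneg z) hz.le _) (by positivity)
      _ = (j : ℝ) * r ^ (j - 1) := one_mul _
  · simpa [Metric.mem_ball, Real.dist_eq] using hr0
  · apply summable_of_ne_finset_zero (s := {0})
    intro j hj
    simp only [Finset.mem_singleton] at hj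
    simp [zero_pow hj]
  · rwa [Metric.mem_ball, Real.dist_eq, sub_zero]

lemma summable_S1 {y : ℝ} (hy : |y| < 1) :
    Summable (fun j : ℕ => ((j : ℝ) + 1) * b (j + 1) * y ^ j) := by
  apply Summable.of_norm_bounded (summable_add_one_mul (r := |y|) (by rwa [abs_abs]))
  intro j
  rw [Real.norm_eq_abs, abs_mul, abs_mul, abs_pow]
  have h1 : |(j : ℝ) + 1| = (j : ℝ) + 1 := abs_of_pos (by positivity)
  rw [h1, abs_of_pos (b_pos _)]
  calc ((j : ℝ) + 1) * b (j + 1) * |y| ^ j ≤ ((j : ℝ) + 1) * 1 * |y| ^ j := by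
        apply mul_le_mul_of_nonneg_right _ (by positivity)
        exact mul_le_mul_of_nonneg_left (b_le_one _) (by positivity)
    _ = ((j : ℝ) + 1) * |y| ^ j := by ring

lemma summable_S2 {y : ℝ} (hy : |y| < 1) :
    Summable (fun j : ℕ => (j : ℝ) * b j * y ^ j) := by
  apply Summable.of_norm_bounded (summable_add_one_mul (r := |y|) (by rwa [abs_abs]))
  intro j
  rw [Real.norm_eq_abs, abs_mul, abs_mul, abs_pow, Nat.abs_cast, abs_of_pos (b_pos _)]
  have hj : (j : ℝ) ≤ (j : ℝ) + 1 := by linarith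
  calc (j : ℝ) * b j * |y| ^ j ≤ ((j : ℝ) + 1) * 1 * |y| ^ j := by
        apply mul_le_mul_of_nonneg_right _ (by positivity)
        exact mul_le_mul hj (b_le_one _) (b_pos _).le (by positivity)
    _ = ((j : ℝ) + 1) * |y| ^ j := by ring

lemma phiD_eq {y : ℝ} (hy : |y| < 1) :
    phiD y = ∑' j : ℕ, ((j : ℝ) + 1) * b (j + 1) * y ^ j := by
  rw [phiD, (summable_phiD_term hy).tsum_eq_zero_add]
  have h0 : b 0 * (((0:ℕ) : ℝ) * y ^ (0 - 1)) = 0 := by norm_num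
  rw [h0, zero_add]
  apply tsum_congr
  intro j
  simp only [Nat.add_sub_cancel]
  push_cast
  ring

lemma ode {y : ℝ} (hy : |y| < 1) : (1 - y) * phiD y = phi y / 2 := by
  have h1 : y * phiD y = ∑' j : ℕ, (j : ℝ) * b j * y ^ j := by
    rw [phiD, ← tsum_mul_left]
    apply tsum_congr
    intro j
    cases j with
    | zero => simp
    | succ k =>
        simp only [Nat.add_sub_cancel]
        push_cast
        rw [pow_succ]
        ring
  have h2 : phi y / 2 = ∑' j : ℕ, b j / 2 * y ^ j := by
    rw [phi, ← tsum_div_const]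
    apply tsum_congr; intro j; ring
  have Shalf : Summable (fun j : ℕ => b j / 2 * y ^ j) := by
    apply ((summable_phi hy).div_const 2).congr
    intro j; ring
  have key : phiD y - y * phiD y - phi y / 2 = 0 := by
    rw [h1, phiD_eq hy, h2, ← (summable_S1 hy).tsum_sub (summable_S2 hy),
      ← ((summable_S1 hy).sub (summable_S2 hy)).tsum_sub Shalf]
    have h00 : (0 : ℝ) = ∑' _ : ℕ, (0 : ℝ) := by simp
    conv_rhs => rw [h00]
    apply tsum_congr
    intro j
    rw [b_succ]
    field_simp
    ring
  linear_combination key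

lemma phi_zero : phi 0 = 1 := by
  rw [phi, tsum_eq_single 0 (fun j hj => by simp [zero_pow hj])]
  simp [b_zero]

lemma phi_nonneg {y : ℝ} (hy : 0 ≤ y) : 0 ≤ phi y := by
  apply tsum_nonneg
  intro j
  exact mul_nonneg (b_pos j).le (pow_nonneg hy j)

lemma phi_sq {y : ℝ} (hy : 0 ≤ y) (hy1 : y < 1) : phi y ^ 2 * (1 - y) = 1 := by
  have hmem : ∀ x ∈ Set.Icc (0:ℝ) y, |x| < 1 := by
    intro x hx
    rw [abs_of_nonneg hx.1]
    exact lt_of_le_of_lt hx.2 hy1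
  have hd : ∀ x ∈ Set.Icc (0:ℝ) y,
      HasDerivAt (fun t => phi t ^ 2 * (1 - t))
        ((2 * phi x ^ 1 * phiD x) * (1 - x) + phi x ^ 2 * (-1)) x := by
    intro x hx
    exact ((phi_hasDeriv (hmem x hx)).pow 2).mul ((hasDerivAt_id x).const_sub 1)
  have heq : ∀ y₂ ∈ Set.Icc (0:ℝ) y, phi y₂ ^ 2 * (1 - y₂) = 1 := by
    apply eq_of_has_deriv_right_eq (f' := fun _ => (0:ℝ))
      (g := fun _ => (1:ℝ))
    · intro x hx
      have hx' : x ∈ Set.Icc (0:ℝ) y := ⟨hx.1, hx.2.le⟩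
      have h0 : (2 * phi x ^ 1 * phiD x) * (1 - x) + phi x ^ 2 * (-1) = 0 := by
        linear_combination 2 * phi x * ode (hmem x hx')
      exact (h0 ▸ hd x hx').hasDerivWithinAt
    · intro x hx
      exact (hasDerivAt_const x 1).hasDerivWithinAt
    · intro x hx
      exact ((hd x hx).continuousAt).continuousWithinAt
    · exact continuousOn_const
    · simp [phi_zero]
  simpa using heq y ⟨hy, le_refl y⟩

lemma phi_mul_sqrt {y : ℝ} (hy : 0 ≤ y) (hy1 : y < 1) :
    phi y * Real.sqrt (1 - y) = 1 := by
  have h1 : (phi y * Real.sqrt (1 - y)) ^ 2 = 1 := by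
    rw [mul_pow, Real.sq_sqrt (by linarith)]
    exact phi_sq hy hy1
  have h2 : 0 ≤ phi y * Real.sqrt (1 - y) := by
    apply mul_nonneg (phi_nonneg hy) (Real.sqrt_nonneg _)
  nlinarith [h1, h2]

end Stage2

namespace Stage3

open ArcsinProof Stage2

def g (x : ℝ) : ℝ := ∑' j : ℕ, arcsinCoeff j * x ^ (2 * j + 1)

lemma summable_g {x : ℝ} (hx : |x| ≤ 1) :
    Summable (fun j : ℕ => arcsinCoeff j * x ^ (2 * j + 1)) := by
  apply Summable.of_norm_bounded summable_c
  intro j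
  rw [Real.norm_eq_abs, abs_mul, abs_of_pos (c_pos j), abs_pow]
  calc arcsinCoeff j * |x| ^ (2 * j + 1) ≤ arcsinCoeff j * 1 := by
        apply mul_le_mul_of_nonneg_left _ (c_pos j).le
        exact pow_le_one₀ (abs_nonneg x) hx
    _ = arcsinCoeff j := mul_one _

lemma g_hasDeriv {x : ℝ} (hx : |x| < 1) : HasDerivAt g (phi (x ^ 2)) x := by
  set r : ℝ := (1 + |x|) / 2 with hr
  have h0 : 0 ≤ |x| := abs_nonneg x
  have hxr : |x| < r := by rw [hr]; linarith
  have hr1 : r < 1 := by rw [hr]; linarith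
  have hr0 : 0 < r := by rw [hr]; linarith
  have hder : HasDerivAt g
      (∑' j : ℕ, arcsinCoeff j * (((2 * j + 1 : ℕ) : ℝ) * x ^ (2 * j + 1 - 1))) x := by
    show HasDerivAt (fun z => ∑' j : ℕ, arcsinCoeff j * z ^ (2 * j + 1)) _ x
    apply hasDerivAt_tsum_of_isPreconnected (u := fun j : ℕ => (r ^ 2) ^ j)
      (summable_geometric_of_norm_lt_one (by
        rw [Real.norm_eq_abs, abs_of_pos (by positivity)]; nlinarith))
      Metric.isOpen_ball (convex_ball (0:ℝ) r).isPreconnected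
      (g' := fun j z => arcsinCoeff j * (((2 * j + 1 : ℕ) : ℝ) * z ^ (2 * j + 1 - 1)))
      (y₀ := 0)
    · intro j z _
      exact (hasDerivAt_pow (2 * j + 1) z).const_mul (arcsinCoeff j)
    · intro j z hz
      rw [Metric.mem_ball, Real.dist_eq, sub_zero] at hz
      rw [Real.norm_eq_abs, abs_mul, abs_of_pos (c_pos j), abs_mul, abs_pow, Nat.abs_cast]
      simp only [Nat.add_sub_cancel]
      have hb : arcsinCoeff j * ((2 * j + 1 : ℕ) : ℝ) = b j := by
        push_cast
        exact c_mul j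
      calc arcsinCoeff j * (((2 * j + 1 : ℕ) : ℝ) * |z| ^ (2 * j)) ≤ 1 * |z| ^ (2 * j) := by
            rw [← mul_assoc, hb]
            exact mul_le_mul_of_nonneg_right (b_le_one j) (by positivity)
        _ = (|z| ^ 2) ^ j := by rw [one_mul, ← pow_mul]
        _ ≤ (r ^ 2) ^ j := by
            apply pow_le_pow_left₀ (by positivity)
            exact pow_le_pow_left₀ (abs_nonneg z) hz.le 2
    · simpa [Metric.mem_ball, Real.dist_eq] using hr0
    · apply summable_of_ne_finset_zero (s := ∅)
      intro j _
      simp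
    · rwa [Metric.mem_ball, Real.dist_eq, sub_zero]
  have heq : (∑' j : ℕ, arcsinCoeff j * (((2 * j + 1 : ℕ) : ℝ) * x ^ (2 * j + 1 - 1)))
      = phi (x ^ 2) := by
    rw [phi]
    apply tsum_congr
    intro j
    simp only [Nat.add_sub_cancel]
    have hb : arcsinCoeff j * ((2 * j + 1 : ℕ) : ℝ) = b j := by
      push_cast; exact c_mul j
    rw [← mul_assoc, hb, ← pow_mul]
  rwa [heq] at hder

lemma phi_eq_inv_sqrt {x : ℝ} (h0 : 0 ≤ x) (h1 : x < 1) :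
    phi (x ^ 2) = 1 / Real.sqrt (1 - x ^ 2) := by
  have hx2 : x ^ 2 < 1 := by nlinarith
  have hs := phi_mul_sqrt (y := x ^ 2) (by positivity) hx2
  have hspos : 0 < Real.sqrt (1 - x ^ 2) := Real.sqrt_pos.mpr (by linarith)
  field_simp
  linarith [hs]

lemma g_eq_arcsin : ∀ x ∈ Set.Icc (0:ℝ) 1, g x = Real.arcsin x := by
  apply eq_of_has_deriv_right_eq (f' := fun x => phi (x ^ 2))
  · intro x hx
    have hx1 : |x| < 1 := by rw [abs_of_nonneg hx.1]; exact hx.2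
    exact (g_hasDeriv hx1).hasDerivWithinAt
  · intro x hx
    have hne1 : x ≠ 1 := ne_of_lt hx.2
    have hne2 : x ≠ -1 := by intro hc; rw [hc] at hx; linarith [hx.1]
    have := Real.hasDerivAt_arcsin hne2 hne1
    rw [← phi_eq_inv_sqrt hx.1 hx.2] at this
    exact this.hasDerivWithinAt
  · apply continuousOn_tsum (u := arcsinCoeff)
    · intro j
      exact (continuous_const.mul (continuous_pow _)).continuousOn
    · exact summable_c
    · intro j x hx
      rw [Real.norm_eq_abs, abs_mul, abs_of_pos (c_pos j), abs_pow]
      calc arcsinCoeff j * |x| ^ (2 * j + 1) ≤ arcsinCoeff j * 1 := by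
            apply mul_le_mul_of_nonneg_left _ (c_pos j).le
            apply pow_le_one₀ (abs_nonneg x)
            rw [abs_of_nonneg hx.1]; exact hx.2
        _ = arcsinCoeff j := mul_one _
  · exact Real.continuous_arcsin.continuousOn
  · have : g 0 = 0 := by
      rw [g]
      have : ∀ j : ℕ, arcsinCoeff j * (0:ℝ) ^ (2 * j + 1) = 0 := by
        intro j; simp
      rw [tsum_congr this, tsum_zero]
    rw [this, Real.arcsin_zero]

end Stage3

/-- `Arcsin v := ∑_{j≥0} c_j v^{2j+1}` for a bounded operator `v` (absolutely convergent
when `‖v‖ ≤ 1`). -/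
def opArcsin {E : Type*} [NormedAddCommGroup E] [NormedSpace ℂ E]
    (v : E →L[ℂ] E) : E →L[ℂ] E :=
  ∑' j : ℕ, (arcsinCoeff j : ℂ) • v ^ (2 * j + 1)

open ArcsinProof Stage2 Stage3

/-- If `‖v‖ + ‖w‖ ≤ 1` then
`‖Arcsin(v + w) − Arcsin v‖ ≤ arcsin(‖v‖ + ‖w‖) − arcsin ‖v‖`. -/
theorem norm_opArcsin_sub_opArcsin_le
    (E : Type*) [NormedAddCommGroup E] [NormedSpace ℂ E] [CompleteSpace E]
    (v w : E →L[ℂ] E) (h : ‖v‖ + ‖w‖ ≤ 1) :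
    ‖opArcsin (v + w) - opArcsin v‖ ≤
      Real.arcsin (‖v‖ + ‖w‖) - Real.arcsin ‖v‖ := by
  have ha0 : (0:ℝ) ≤ ‖v‖ := norm_nonneg v
  have hb0 : (0:ℝ) ≤ ‖w‖ := norm_nonneg w
  have hvw : ‖v + w‖ ≤ ‖v‖ + ‖w‖ := norm_add_le v w
  have hvle : ‖v‖ ≤ 1 := by linarith
  have hpow : ∀ (u : E →L[ℂ] E) (n : ℕ), ‖u ^ n‖ ≤ ‖u‖ ^ n := by
    intro u n
    induction n with
    | zero => rw [pow_zero, pow_zero]; exact ContinuousLinearMap.norm_id_le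
    | succ n ih =>
      rw [pow_succ, pow_succ]
      calc ‖u ^ n * u‖ ≤ ‖u ^ n‖ * ‖u‖ := norm_mul_le _ _
        _ ≤ ‖u‖ ^ n * ‖u‖ := mul_le_mul_of_nonneg_right ih (norm_nonneg u)
  have hkey : ∀ n : ℕ, ‖(v + w) ^ n - v ^ n‖ ≤ (‖v‖ + ‖w‖) ^ n - ‖v‖ ^ n := by
    intro n
    induction n with
    | zero => simp
    | succ n ih =>
      have e : (v + w) ^ (n + 1) - v ^ (n + 1)
          = (v + w) ^ n * w + ((v + w) ^ n - v ^ n) * v := by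
        rw [pow_succ, pow_succ]
        noncomm_ring
      rw [e]
      have h1 : ‖(v + w) ^ n‖ ≤ (‖v‖ + ‖w‖) ^ n :=
        le_trans (hpow _ n) (pow_le_pow_left₀ (norm_nonneg _) hvw n)
      calc ‖(v + w) ^ n * w + ((v + w) ^ n - v ^ n) * v‖
          ≤ ‖(v + w) ^ n * w‖ + ‖((v + w) ^ n - v ^ n) * v‖ := norm_add_le _ _
        _ ≤ ‖(v + w) ^ n‖ * ‖w‖ + ‖(v + w) ^ n - v ^ n‖ * ‖v‖ :=
            add_le_add (norm_mul_le _ _) (norm_mul_le _ _)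
        _ ≤ (‖v‖ + ‖w‖) ^ n * ‖w‖ + ((‖v‖ + ‖w‖) ^ n - ‖v‖ ^ n) * ‖v‖ :=
            add_le_add (mul_le_mul_of_nonneg_right h1 hb0)
              (mul_le_mul_of_nonneg_right ih ha0)
        _ = (‖v‖ + ‖w‖) ^ (n + 1) - ‖v‖ ^ (n + 1) := by
            rw [pow_succ, pow_succ]; ring
  have hcnorm : ∀ (j : ℕ) (X : E →L[ℂ] E),
      ‖(arcsinCoeff j : ℂ) • X‖ ≤ arcsinCoeff j * ‖X‖ := by
    intro j X
    calc ‖(arcsinCoeff j : ℂ) • X‖ ≤ ‖(arcsinCoeff j : ℂ)‖ * ‖X‖ := ContinuousLinearMap.opNorm_smul_le _ _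
      _ = arcsinCoeff j * ‖X‖ := by
          rw [Complex.norm_real, Real.norm_eq_abs, abs_of_pos (c_pos j)]
  have Sv : Summable (fun j : ℕ => (arcsinCoeff j : ℂ) • v ^ (2 * j + 1)) := by
    apply Summable.of_norm_bounded summable_c
    intro j
    apply le_trans (hcnorm j _)
    calc arcsinCoeff j * ‖v ^ (2 * j + 1)‖ ≤ arcsinCoeff j * 1 := by
          apply mul_le_mul_of_nonneg_left _ (c_pos j).le
          exact le_trans (hpow v _) (pow_le_one₀ ha0 hvle)
      _ = arcsinCoeff j := mul_one _
  have Svw : Summable (fun j : ℕ => (arcsinCoeff j : ℂ) • (v + w) ^ (2 * j + 1)) := by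
    apply Summable.of_norm_bounded summable_c
    intro j
    apply le_trans (hcnorm j _)
    calc arcsinCoeff j * ‖(v + w) ^ (2 * j + 1)‖ ≤ arcsinCoeff j * 1 := by
          apply mul_le_mul_of_nonneg_left _ (c_pos j).le
          exact le_trans (hpow (v + w) _) (pow_le_one₀ (norm_nonneg _) (le_trans hvw h))
      _ = arcsinCoeff j := mul_one _
  have hdiff : opArcsin (v + w) - opArcsin v
      = ∑' j : ℕ, (arcsinCoeff j : ℂ) • ((v + w) ^ (2 * j + 1) - v ^ (2 * j + 1)) := by
    rw [opArcsin, opArcsin, ← Svw.tsum_sub Sv]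
    apply tsum_congr
    intro j
    rw [smul_sub]
  have Sgt : Summable (fun j : ℕ => arcsinCoeff j * (‖v‖ + ‖w‖) ^ (2 * j + 1)) :=
    summable_g (by rw [abs_of_nonneg (by linarith)]; exact h)
  have Sga : Summable (fun j : ℕ => arcsinCoeff j * ‖v‖ ^ (2 * j + 1)) :=
    summable_g (by rw [abs_of_nonneg ha0]; exact hvle)
  have Smaj := Sgt.sub Sga
  have hbound : ∀ j : ℕ,
      ‖(arcsinCoeff j : ℂ) • ((v + w) ^ (2 * j + 1) - v ^ (2 * j + 1))‖
        ≤ arcsinCoeff j * (‖v‖ + ‖w‖) ^ (2 * j + 1) - arcsinCoeff j * ‖v‖ ^ (2 * j + 1) := by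
    intro j
    apply le_trans (hcnorm j _)
    rw [← mul_sub]
    exact mul_le_mul_of_nonneg_left (hkey (2 * j + 1)) (c_pos j).le
  have Snorm : Summable (fun j : ℕ =>
      ‖(arcsinCoeff j : ℂ) • ((v + w) ^ (2 * j + 1) - v ^ (2 * j + 1))‖) :=
    Summable.of_nonneg_of_le (fun j => norm_nonneg _) hbound Smaj
  calc ‖opArcsin (v + w) - opArcsin v‖
      = ‖∑' j : ℕ, (arcsinCoeff j : ℂ) • ((v + w) ^ (2 * j + 1) - v ^ (2 * j + 1))‖ := by
        rw [hdiff]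
    _ ≤ ∑' j : ℕ, ‖(arcsinCoeff j : ℂ) • ((v + w) ^ (2 * j + 1) - v ^ (2 * j + 1))‖ :=
        norm_tsum_le_tsum_norm Snorm
    _ ≤ ∑' j : ℕ, (arcsinCoeff j * (‖v‖ + ‖w‖) ^ (2 * j + 1)
          - arcsinCoeff j * ‖v‖ ^ (2 * j + 1)) :=
        Summable.tsum_le_tsum hbound Snorm Smaj
    _ = (∑' j : ℕ, arcsinCoeff j * (‖v‖ + ‖w‖) ^ (2 * j + 1))
          - ∑' j : ℕ, arcsinCoeff j * ‖v‖ ^ (2 * j + 1) := Sgt.tsum_sub Sga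
    _ = g (‖v‖ + ‖w‖) - g ‖v‖ := rfl
    _ = Real.arcsin (‖v‖ + ‖w‖) - Real.arcsin ‖v‖ := by
        rw [g_eq_arcsin _ ⟨by linarith, h⟩, g_eq_arcsin _ ⟨ha0, hvle⟩]
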